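/- Let f : (0,∞) → R be increasing and continuously differentiable, and suppose that for all 0 < a < b, the quantity (b − a)/(f(b) − f(a)) lies in [a, b]. Then f'(x) = 1/x for all x > 0, i.e., f = log + constant. -/

import Mathlib

theorem log_characterization (f f' : ℝ → ℝ)
    (hmono : StrictMonoOn f (Set.Ioi 0))
    (hderiv : ∀ x ∈ Set.Ioi (0:ℝ), HasDerivAt f (f' x) x)
    (hcont : ContinuousOn f' (Set.Ioi 0))
    (hmean : ∀ a b : ℝ, 0 < a → a < b →
      (b - a) / (f b - f a) ∈ Set.Icc a b) :
    (∀ x : ℝ, 0 < x → f' x = 1 / x) ∧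
      ∃ c : ℝ, ∀ x : ℝ, 0 < x → f x = Real.log x + c := by
  have key : ∀ x : ℝ, 0 < x → f' x = 1 / x := by
    intro a ha
    -- slope bounds
    have hb : ∀ b, a < b → 1 / b ≤ slope f a b ∧ slope f a b ≤ 1 / a := by
      intro b hab
      have hb0 : 0 < b := ha.trans hab
      have hfab : 0 < f b - f a :=
        sub_pos.2 (hmono ha hb0 hab)
      have hba : 0 < b - a := sub_pos.2 hab
      obtain ⟨h1, h2⟩ := hmean a b ha hab
      have hslope : slope f a b = (f b - f a) / (b - a) := slope_def_field f a b
      constructor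
      · rw [hslope, le_div_iff₀ hba, div_mul_eq_mul_div, div_le_iff₀ hb0]
        have := (div_le_iff₀ hfab).1 h2
        nlinarith
      · rw [hslope, div_le_div_iff₀ hba ha]
        have := (le_div_iff₀ hfab).1 h1
        nlinarith
    have hd := (hasDerivAt_iff_tendsto_slope.1 (hderiv a ha))
    have hd' : Filter.Tendsto (slope f a) (nhdsWithin a (Set.Ioi a)) (nhds (f' a)) :=
      hd.mono_left (nhdsWithin_mono a fun x hx => ne_of_gt hx)
    have hne : (nhdsWithin a (Set.Ioi a)).NeBot := nhdsGT_neBot a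
    have hle : f' a ≤ 1 / a :=
      le_of_tendsto hd' (eventually_mem_nhdsWithin.mono fun b hb' => (hb b hb').2)
    have hinv : Filter.Tendsto (fun b : ℝ => 1 / b) (nhdsWithin a (Set.Ioi a)) (nhds (1 / a)) :=
      ((continuousAt_const.div continuousAt_id ha.ne').tendsto).mono_left nhdsWithin_le_nhds
    have hge : 1 / a ≤ f' a :=
      le_of_tendsto_of_tendsto hinv hd' (eventually_mem_nhdsWithin.mono fun b hb' => (hb b hb').1)
    linarith
  refine ⟨key, f 1 - Real.log 1, ?_⟩
  intro x hx
  have hgderiv : ∀ y ∈ Set.Ioi (0:ℝ), HasDerivAt (fun t => f t - Real.log t) 0 y := by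
    intro y hy
    have := (hderiv y hy).sub (Real.hasDerivAt_log (ne_of_gt hy))
    rw [key y hy] at this
    simp [one_div] at this
    exact this
  have hconst : (fun t => f t - Real.log t) x = (fun t => f t - Real.log t) 1 := by
    apply (convex_Ioi (0:ℝ)).is_const_of_fderivWithin_eq_zero
      (𝕜 := ℝ) (f := fun t => f t - Real.log t)
    · intro y hy
      exact ((hgderiv y hy).differentiableAt).differentiableWithinAt
    · intro y hy
      rw [fderivWithin_of_isOpen isOpen_Ioi hy, (hgderiv y hy).hasFDerivAt.fderiv]
      ext
      simp
    · exact hx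
    · exact Set.mem_Ioi.2 one_pos
  simp only at hconst
  linarith
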